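/- If a finite group G (written multiplicatively) admits a complete mapping, then there exists an ordering (enumeration) of all elements of G whose product equals the identity. -/

import Mathlib

private lemma telescope_prod {G : Type*} [Group G] (g : ℕ → G) :
    ∀ k, ((List.range k).map (fun i => (g i)⁻¹ * g (i + 1))).prod = (g 0)⁻¹ * g k := by
  intro k
  induction k with
  | zero => simp
  | succ n ih =>
      rw [List.range_succ, List.map_append, List.prod_append, ih]
      simp [mul_assoc]

private lemma cycle_lists {G : Type*} [Group G] [Fintype G] [DecidableEq G]
    (σ : G ≃ G) (f : G → G) (hfσ : ∀ x, f x = x * σ x) (hf : Function.Bijective f) :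
    ∀ S : Finset G, (∀ x ∈ S, f x ∈ S) →
      ∃ l : List G, l.Nodup ∧ (∀ g, g ∈ l ↔ ∃ x ∈ S, σ x = g) ∧ l.prod = 1 := by
  intro S
  induction S using Finset.strongInduction with
  | _ S ih =>
  intro hSinv
  rcases S.eq_empty_or_nonempty with rfl | ⟨p, hp⟩
  · exact ⟨[], by simp⟩
  · -- p is a periodic point of f
    have hper : p ∈ Function.periodicPts f := by
      set e : G ≃ G := Equiv.ofBijective f hf with he
      have hcoe : f = ⇑e := rfl
      refine Function.mk_mem_periodicPts (n := orderOf e) (orderOf_pos e) ?_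
      show f^[orderOf e] p = p
      rw [hcoe, Equiv.Perm.iterate_eq_pow, pow_orderOf_eq_one]
      rfl
    set k := Function.minimalPeriod f p with hk
    have hkpos : 0 < k := Function.minimalPeriod_pos_of_mem_periodicPts hper
    have hfk : f^[k] p = p := Function.iterate_minimalPeriod
    -- orbit
    set O : Finset G := (Finset.range k).image (fun i => f^[i] p) with hO
    have hinjO : Set.InjOn (fun i => f^[i] p) (Finset.range k : Set ℕ) := by
      intro a ha b hb hab
      exact Function.iterate_injOn_Iio_minimalPeriod
        (by simpa using ha) (by simpa using hb) hab
    have hpO : p ∈ O := by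
      refine Finset.mem_image.2 ⟨0, Finset.mem_range.2 hkpos, rfl⟩
    have hiterS : ∀ i : ℕ, f^[i] p ∈ S := by
      intro i
      induction i with
      | zero => simpa using hp
      | succ n ihn =>
          rw [Function.iterate_succ_apply']
          exact hSinv _ ihn
    have hOS : ∀ x ∈ O, x ∈ S := by
      intro x hx
      rcases Finset.mem_image.1 hx with ⟨i, _, rfl⟩
      exact hiterS i
    -- list for the orbit
    set l1 : List G := (List.range k).map (fun i => σ (f^[i] p)) with hl1
    have hl1nodup : l1.Nodup := by
      refine List.Nodup.map_on ?_ List.nodup_range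
      intro a ha b hb hab
      have : f^[a] p = f^[b] p := σ.injective hab
      exact hinjO (by simpa using List.mem_range.1 ha)
        (by simpa using List.mem_range.1 hb) this
    have hσval : ∀ i, σ (f^[i] p) = (f^[i] p)⁻¹ * f^[i+1] p := by
      intro i
      rw [Function.iterate_succ_apply', hfσ]
      group
    have hl1prod : l1.prod = 1 := by
      have : l1 = (List.range k).map (fun i => ((f^[i] p))⁻¹ * f^[i+1] p) := by
        simp only [hl1]
        exact List.map_congr_left (fun i _ => hσval i)
      rw [this, telescope_prod (fun i => f^[i] p) k]
      simp [hfk]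
    have hl1mem : ∀ g, g ∈ l1 ↔ ∃ x ∈ O, σ x = g := by
      intro g
      simp only [hl1, List.mem_map, List.mem_range, hO, Finset.mem_image, Finset.mem_range]
      constructor
      · rintro ⟨i, hi, rfl⟩; exact ⟨f^[i] p, ⟨i, hi, rfl⟩, rfl⟩
      · rintro ⟨x, ⟨i, hi, rfl⟩, rfl⟩; exact ⟨i, hi, rfl⟩
    -- recurse on S \ O
    have hOsub : O ⊆ S := fun x hx => hOS x hx
    have hsub : S \ O ⊂ S := by
      refine Finset.sdiff_ssubset ?_ ⟨p, hpO⟩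
      exact hOsub
    have hinv' : ∀ x ∈ S \ O, f x ∈ S \ O := by
      intro x hx
      rcases Finset.mem_sdiff.1 hx with ⟨hxS, hxO⟩
      refine Finset.mem_sdiff.2 ⟨hSinv x hxS, ?_⟩
      intro hfxO
      rcases Finset.mem_image.1 hfxO with ⟨i, hi, hfi⟩
      apply hxO
      rcases Nat.eq_zero_or_pos i with rfl | hipos
      · -- f x = p = f^[k] p, so x = f^[k-1] p
        have : f x = f (f^[k-1] p) := by
          rw [← Function.iterate_succ_apply' f (k-1) p,
            Nat.succ_eq_add_one, Nat.sub_add_cancel hkpos, hfk]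
          simpa using hfi.symm
        have hx' : x = f^[k-1] p := hf.injective this
        exact Finset.mem_image.2 ⟨k-1, Finset.mem_range.2 (Nat.sub_lt hkpos one_pos), hx'.symm⟩
      · have : f x = f (f^[i-1] p) := by
          rw [← Function.iterate_succ_apply' f (i-1) p,
            Nat.succ_eq_add_one, Nat.sub_add_cancel hipos]
          exact hfi.symm
        have hx' : x = f^[i-1] p := hf.injective this
        exact Finset.mem_image.2 ⟨i-1, Finset.mem_range.2
          (lt_of_le_of_lt (Nat.sub_le i 1) (Finset.mem_range.1 hi)), hx'.symm⟩
    obtain ⟨l2, hl2nodup, hl2mem, hl2prod⟩ := ih (S \ O) hsub hinv'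
    refine ⟨l1 ++ l2, ?_, ?_, by rw [List.prod_append, hl1prod, hl2prod, one_mul]⟩
    · refine List.Nodup.append hl1nodup hl2nodup ?_
      intro g hg1 hg2
      rcases (hl1mem g).1 hg1 with ⟨x, hxO, rfl⟩
      rcases (hl2mem _).1 hg2 with ⟨y, hyS, hyx⟩
      have : y = x := σ.injective hyx
      subst this
      exact (Finset.mem_sdiff.1 hyS).2 hxO
    · intro g
      rw [List.mem_append, hl1mem, hl2mem]
      constructor
      · rintro (⟨x, hx, rfl⟩ | ⟨x, hx, rfl⟩)
        · exact ⟨x, hOsub hx, rfl⟩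
        · exact ⟨x, (Finset.mem_sdiff.1 hx).1, rfl⟩
      · rintro ⟨x, hxS, rfl⟩
        by_cases hxO : x ∈ O
        · exact Or.inl ⟨x, hxO, rfl⟩
        · exact Or.inr ⟨x, Finset.mem_sdiff.2 ⟨hxS, hxO⟩, rfl⟩

theorem complete_mapping_exists_ordering_prod_one {G : Type*} [Group G] [Fintype G]
    (σ : G ≃ G) (h : Function.Bijective (fun x => x * σ x)) :
    ∃ l : List G, l.Nodup ∧ (∀ g : G, g ∈ l) ∧ l.prod = 1 := by
  classical
  obtain ⟨l, hnodup, hmem, hprod⟩ :=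
    cycle_lists σ (fun x => x * σ x) (fun _ => rfl) h Finset.univ
      (fun x _ => Finset.mem_univ _)
  refine ⟨l, hnodup, fun g => ?_, hprod⟩
  exact (hmem g).2 ⟨σ.symm g, Finset.mem_univ _, σ.apply_symm_apply g⟩
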